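/- Under assumptions A1–A5 with constant learning rate η > 0, assuming that at every iterate (both at w_j(k) and at w̄(k)) the matrix of expected stochastic subgradients of the functions F_j has Frobenius norm at most H, the average iterate w̄(k) := (1/M)Σ_j w_j(k) satisfies, for every k ≥ 0: E[dist(w̄(k+1), W*)²] ≤ E[dist(w̄(k), W*)²] + η²E/M + (4ηH/M)·||ΔW(k)||_F − (2η/M)·( E[F(w̄(k))] − F* ). -/

import Mathlib

open MeasureTheory Matrix Finset

noncomputable section

/-- Squared Frobenius norm of a real matrix. -/
def frobSq {n M : ℕ} (B : Matrix (Fin n) (Fin M) ℝ) : ℝ := ∑ i, ∑ j, B i j ^ 2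

/-- Frobenius norm of a real matrix. -/
def frobNorm {n M : ℕ} (B : Matrix (Fin n) (Fin M) ℝ) : ℝ := Real.sqrt (frobSq B)

/-- Squared Frobenius norm of a complex matrix. -/
def frobSqC {n M : ℕ} (B : Matrix (Fin n) (Fin M) ℂ) : ℝ := ∑ i, ∑ j, ‖B i j‖ ^ 2

/-- The `j`-th column of a matrix, viewed as a vector of `EuclideanSpace ℝ (Fin n)`. -/
def col {n M : ℕ} (B : Matrix (Fin n) (Fin M) ℝ) (j : Fin M) : EuclideanSpace ℝ (Fin n) :=
  WithLp.toLp 2 (fun i => B i j)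

/-- `ΔB := B (I - 𝟙𝟙ᵀ/M)`: subtract from every column the average of all columns. -/
def ctr {n M : ℕ} (B : Matrix (Fin n) (Fin M) ℝ) : Matrix (Fin n) (Fin M) ℝ :=
  Matrix.of fun i j => B i j - (∑ j', B i j') / M

/-- The average of the columns of `B` (the average model `w̄`). -/
def colAvg {n M : ℕ} (B : Matrix (Fin n) (Fin M) ℝ) : EuclideanSpace ℝ (Fin n) :=
  WithLp.toLp 2 (fun i => (∑ j, B i j) / M)

/-- Time average of a sequence of vectors over iterations `0, …, K-1`. -/
def timeAvg {n : ℕ} (K : ℕ) (v : ℕ → EuclideanSpace ℝ (Fin n)) : EuclideanSpace ℝ (Fin n) :=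
  WithLp.toLp 2 (fun i => (∑ k ∈ Finset.range K, v k i) / K)

/-- `g` is a subgradient of `f` at `x`. -/
def IsSubgradAt {n : ℕ} (f : EuclideanSpace ℝ (Fin n) → ℝ)
    (g x : EuclideanSpace ℝ (Fin n)) : Prop :=
  ∀ y, f x + (inner ℝ g (y - x) : ℝ) ≤ f y

/-- Cauchy–Schwarz for the Frobenius inner product. -/
lemma frob_cs {n M : ℕ} (B C : Matrix (Fin n) (Fin M) ℝ) :
    |∑ i, ∑ j, B i j * C i j| ≤ frobNorm B * frobNorm C := by
  have h := Finset.sum_mul_sq_le_sq_mul_sq (Finset.univ : Finset (Fin n × Fin M))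
    (fun p => B p.1 p.2) (fun p => C p.1 p.2)
  have hprod : ∀ (f : Fin n → Fin M → ℝ),
      (∑ p : Fin n × Fin M, f p.1 p.2) = ∑ i, ∑ j, f i j := by
    intro f
    rw [← Finset.univ_product_univ, Finset.sum_product]
  rw [hprod (fun i j => B i j * C i j), hprod (fun i j => B i j ^ 2),
    hprod (fun i j => C i j ^ 2)] at h
  have hB : (0:ℝ) ≤ frobSq B := by
    apply Finset.sum_nonneg; intro i _; apply Finset.sum_nonneg; intro j _; positivity
  calc |∑ i, ∑ j, B i j * C i j|
      = Real.sqrt ((∑ i, ∑ j, B i j * C i j) ^ 2) := (Real.sqrt_sq_eq_abs _).symm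
    _ ≤ Real.sqrt (frobSq B * frobSq C) := Real.sqrt_le_sqrt (by exact h)
    _ = frobNorm B * frobNorm C := Real.sqrt_mul hB _

lemma real_le_of_forall_pos_le_add {a b : ℝ} (h : ∀ ε : ℝ, 0 < ε → a ≤ b + ε) : a ≤ b := by
  by_contra hc
  push_neg at hc
  have := h ((a - b) / 2) (by linarith)
  linarith

/-- **Lemma 2 (distance decrease).** One step of the decentralized update decreases the
expected squared distance of the average model to the set of minimizers. -/
theorem statement11
    (n M : ℕ) (hM : 0 < M)
    -- the consensus matrix: nonnegative, doubly stochastic (A4), normal (A4),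
    -- irreducible (strongly connected graph, A3) and primitive (positive diagonal)
    (A : Matrix (Fin M) (Fin M) ℝ)
    (hnonneg : ∀ i j, 0 ≤ A i j)
    (hrows : ∀ i, ∑ j, A i j = 1)
    (hcols : ∀ j, ∑ i, A i j = 1)
    (hnormal : Aᵀ * A = A * Aᵀ)
    (hirr : ∀ i j, ∃ k : ℕ, 0 < (A ^ k) i j)
    (hdiag : ∀ i, 0 < A i i)
    -- the local objective functions (A1), the global objective `F` and its
    -- nonempty set of global minimizers (A2), with minimum value `F*`
    (Fj : Fin M → EuclideanSpace ℝ (Fin n) → ℝ)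
    (hconv : ∀ j, ConvexOn ℝ Set.univ (Fj j))
    (F : EuclideanSpace ℝ (Fin n) → ℝ) (hFdef : F = fun w => ∑ j, Fj j w)
    (Wstar : Set (EuclideanSpace ℝ (Fin n))) (hWstar : Wstar = {w | ∀ v, F w ≤ F v})
    (hWne : Wstar.Nonempty)
    (Fstar : ℝ) (hFstar : ∀ w ∈ Wstar, F w = Fstar)
    -- probability space carrying the minibatch randomness of the current iteration
    {Ω : Type*} [m0 : MeasurableSpace Ω] (μ : Measure Ω) [IsProbabilityMeasure μ]
    -- current estimates `W = W(k)`, the random stochastic subgradient matrix `G = G(k)`,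
    -- and a random stochastic subgradient matrix `Gt` taken at the average model `w̄(k)`
    (W : Matrix (Fin n) (Fin M) ℝ)
    (G Gt : Ω → Matrix (Fin n) (Fin M) ℝ)
    (hGint : ∀ i j, Integrable (fun ω => G ω i j) μ)
    (hGtint : ∀ i j, Integrable (fun ω => Gt ω i j) μ)
    -- the expected stochastic subgradient matrices
    (EG EGt : Matrix (Fin n) (Fin M) ℝ)
    (hEG : ∀ i j, EG i j = ∫ ω, G ω i j ∂μ)
    (hEGt : ∀ i j, EGt i j = ∫ ω, Gt ω i j ∂μ)
    -- unbiasedness: the expected columns are subgradients at `wⱼ(k)` resp. at `w̄(k)`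
    (hsub : ∀ j, IsSubgradAt (Fj j) (col EG j) (col W j))
    (hsubt : ∀ j, IsSubgradAt (Fj j) (col EGt j) (colAvg W))
    -- the constants `E` and `H`
    (E H : ℝ)
    (hE : Integrable (fun ω => frobSq (G ω)) μ ∧ ∫ ω, frobSq (G ω) ∂μ ≤ E)
    (hH : frobNorm EG ≤ H) (hHt : frobNorm EGt ≤ H)
    -- constant learning rate
    (η : ℝ) (hη : 0 < η)
    (hdint : Integrable (fun ω => Metric.infDist (colAvg (W * A - η • G ω)) Wstar ^ 2) μ) :
    ∫ ω, Metric.infDist (colAvg (W * A - η • G ω)) Wstar ^ 2 ∂μ ≤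
      Metric.infDist (colAvg W) Wstar ^ 2
      + η ^ 2 * E / M
      + 4 * η * H / M * frobNorm (ctr W)
      - 2 * η / M * (F (colAvg W) - Fstar) := by
  classical
  have hM' : (0:ℝ) < M := by exact_mod_cast hM
  have hMne : (M:ℝ) ≠ 0 := ne_of_gt hM'
  have hH0 : 0 ≤ H := le_trans (Real.sqrt_nonneg _) hH
  have hctr0 : 0 ≤ frobNorm (ctr W) := Real.sqrt_nonneg _
  -- column average of the update
  have havg : ∀ (ω : Ω) (i : Fin n),
      colAvg (W * A - η • G ω) i = colAvg W i - (η / M) * ∑ j, G ω i j := by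
    intro ω i
    have h1 : ∑ j, ∑ l, W i l * A l j = ∑ l, W i l := by
      rw [Finset.sum_comm]
      simp only [← Finset.mul_sum, hrows, mul_one]
    simp only [colAvg, PiLp.toLp_apply, Matrix.sub_apply, Matrix.smul_apply, Matrix.mul_apply, smul_eq_mul,
      Finset.sum_sub_distrib, ← Finset.mul_sum, h1]
    ring
  -- squared distance in Euclidean space as a sum of squares
  have hd2 : ∀ x y : EuclideanSpace ℝ (Fin n), dist x y ^ 2 = ∑ i, (x i - y i) ^ 2 := by
    intro x y
    have h0 : (0:ℝ) ≤ ∑ i, dist (x i) (y i) ^ 2 :=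
      Finset.sum_nonneg fun i _ => sq_nonneg _
    rw [EuclideanSpace.dist_eq, Real.sq_sqrt h0]
    exact Finset.sum_congr rfl fun i _ => by rw [Real.dist_eq, sq_abs]
  -- inner product as a sum
  have hinner : ∀ g y x : EuclideanSpace ℝ (Fin n),
      (inner ℝ g (y - x) : ℝ) = ∑ i, g i * (y i - x i) := by
    intro g y x
    rw [PiLp.inner_apply]
    exact Finset.sum_congr rfl fun i _ => by
      simp [RCLike.inner_apply]; ring
  -- key inequality for a fixed minimizer p
  have key : ∀ p ∈ Wstar,
      ∫ ω, Metric.infDist (colAvg (W * A - η • G ω)) Wstar ^ 2 ∂μ ≤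
        dist (colAvg W) p ^ 2 + η ^ 2 * E / M + 4 * η * H / M * frobNorm (ctr W)
          - 2 * η / M * (F (colAvg W) - Fstar) := by
    intro p hp
    set t : Ω → ℝ := fun ω => ∑ i, (colAvg W i - p i) * ∑ j, G ω i j with ht
    set T : ℝ := ∑ i, (colAvg W i - p i) * ∑ j, EG i j with hT
    set f : Ω → ℝ := fun ω =>
      dist (colAvg W) p ^ 2 - 2 * (η / M) * t ω + (η ^ 2 / M) * frobSq (G ω) with hf
    -- pointwise bound
    have hpt : ∀ ω, Metric.infDist (colAvg (W * A - η • G ω)) Wstar ^ 2 ≤ f ω := by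
      intro ω
      have hle : Metric.infDist (colAvg (W * A - η • G ω)) Wstar
          ≤ dist (colAvg (W * A - η • G ω)) p := Metric.infDist_le_dist_of_mem hp
      have hsq : Metric.infDist (colAvg (W * A - η • G ω)) Wstar ^ 2
          ≤ dist (colAvg (W * A - η • G ω)) p ^ 2 :=
        pow_le_pow_left₀ Metric.infDist_nonneg hle 2
      have hdist : dist (colAvg (W * A - η • G ω)) p ^ 2
          = dist (colAvg W) p ^ 2 - 2 * (η / M) * t ω
            + (η / M) ^ 2 * ∑ i, (∑ j, G ω i j) ^ 2 := by
        rw [hd2, hd2, ht]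
        simp only
        rw [Finset.mul_sum, Finset.mul_sum, ← Finset.sum_sub_distrib, ← Finset.sum_add_distrib]
        refine Finset.sum_congr rfl fun i _ => ?_
        rw [havg ω i]
        ring
      have hc : ∀ i, (∑ j, G ω i j) ^ 2 ≤ (M:ℝ) * ∑ j, (G ω i j) ^ 2 := by
        intro i
        have h := sq_sum_le_card_mul_sum_sq (s := (Finset.univ : Finset (Fin M)))
          (f := fun j => G ω i j)
        simpa using h
      have hsum : ∑ i, (∑ j, G ω i j) ^ 2 ≤ (M:ℝ) * frobSq (G ω) := by
        calc ∑ i, (∑ j, G ω i j) ^ 2 ≤ ∑ i, (M:ℝ) * ∑ j, (G ω i j) ^ 2 :=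
              Finset.sum_le_sum fun i _ => hc i
          _ = (M:ℝ) * frobSq (G ω) := by rw [frobSq, ← Finset.mul_sum]
      have hb : (η / M) ^ 2 * ∑ i, (∑ j, G ω i j) ^ 2 ≤ (η ^ 2 / M) * frobSq (G ω) := by
        calc (η / M) ^ 2 * ∑ i, (∑ j, G ω i j) ^ 2
            ≤ (η / M) ^ 2 * ((M:ℝ) * frobSq (G ω)) :=
              mul_le_mul_of_nonneg_left hsum (sq_nonneg _)
          _ = (η ^ 2 / M) * frobSq (G ω) := by field_simp
      have : f ω = dist (colAvg W) p ^ 2 - 2 * (η / M) * t ω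
          + (η ^ 2 / M) * frobSq (G ω) := by rw [hf]
      rw [this]
      linarith [hsq, hdist.le, hdist.ge, hb]
    -- integrability
    have ht_int : Integrable t μ := by
      rw [ht]
      exact integrable_finset_sum _ fun i _ =>
        (integrable_finset_sum _ fun j _ => hGint i j).const_mul _
    have hf_int : Integrable f μ := by
      rw [hf]
      exact (((integrable_const _).sub (ht_int.const_mul _)).add (hE.1.const_mul _))
    -- integral of t
    have hTint : ∫ ω, t ω ∂μ = T := by
      rw [ht, hT]
      rw [integral_finset_sum _ (fun i _ =>
        (integrable_finset_sum _ fun j _ => hGint i j).const_mul _)]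
      refine Finset.sum_congr rfl fun i _ => ?_
      rw [integral_const_mul, integral_finset_sum _ fun j _ => hGint i j]
      congr 1
      exact Finset.sum_congr rfl fun j _ => (hEG i j).symm
    -- integral of f
    have hIf : ∫ ω, f ω ∂μ = dist (colAvg W) p ^ 2 - 2 * (η / M) * T
        + (η ^ 2 / M) * ∫ ω, frobSq (G ω) ∂μ := by
      have h1 : Integrable (fun ω => dist (colAvg W) p ^ 2 - 2 * (η / (M:ℝ)) * t ω) μ :=
        (integrable_const _).sub (ht_int.const_mul _)
      have e1 : ∫ ω, f ω ∂μ
          = (∫ ω, (dist (colAvg W) p ^ 2 - 2 * (η / (M:ℝ)) * t ω) ∂μ)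
            + ∫ ω, (η ^ 2 / (M:ℝ)) * frobSq (G ω) ∂μ := by
        simp only [hf]
        exact integral_add h1 (hE.1.const_mul _)
      have e2 : ∫ ω, (dist (colAvg W) p ^ 2 - 2 * (η / (M:ℝ)) * t ω) ∂μ
          = (∫ _ω, (dist (colAvg W) p ^ 2 : ℝ) ∂μ) - ∫ ω, 2 * (η / (M:ℝ)) * t ω ∂μ :=
        integral_sub (integrable_const _) (ht_int.const_mul _)
      have e3 : ∫ _ω, (dist (colAvg W) p ^ 2 : ℝ) ∂μ = dist (colAvg W) p ^ 2 := by simp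
      have e4 : ∫ ω, 2 * (η / (M:ℝ)) * t ω ∂μ = 2 * (η / (M:ℝ)) * T := by
        rw [integral_const_mul, hTint]
      have e5 : ∫ ω, (η ^ 2 / (M:ℝ)) * frobSq (G ω) ∂μ
          = (η ^ 2 / (M:ℝ)) * ∫ ω, frobSq (G ω) ∂μ := integral_const_mul _ _
      rw [e1, e2, e3, e4, e5]
    -- lower bound on T via the subgradient inequalities
    have hTge : F (colAvg W) - Fstar - 2 * H * frobNorm (ctr W) ≤ T := by
      have hctr : ∀ (i : Fin n) (j : Fin M), ctr W i j = W i j - colAvg W i := fun i j => rfl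
      have hj : ∀ j : Fin M,
          Fj j (colAvg W) - Fj j p + (∑ i, EGt i j * ctr W i j) - (∑ i, EG i j * ctr W i j)
            ≤ ∑ i, EG i j * (colAvg W i - p i) := by
        intro j
        have h1 := hsub j p
        have h2 := hsubt j (col W j)
        rw [hinner] at h1 h2
        have e1 : ∀ i, _root_.col EG j i = EG i j := fun _ => rfl
        have e2 : ∀ i, _root_.col W j i = W i j := fun _ => rfl
        have e3 : ∀ i, _root_.col EGt j i = EGt i j := fun _ => rfl
        simp only [e1, e2, e3] at h1 h2
        -- h1 : Fj j (col W j) + ∑ i, EG i j * (p i - W i j) ≤ Fj j p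
        -- h2 : Fj j (colAvg W) + ∑ i, EGt i j * (W i j - colAvg W i) ≤ Fj j (col W j)
        have hsplit : (∑ i, EG i j * (colAvg W i - p i))
            = -(∑ i, EG i j * (p i - W i j)) - (∑ i, EG i j * ctr W i j) := by
          rw [← Finset.sum_neg_distrib, ← Finset.sum_sub_distrib]
          exact Finset.sum_congr rfl fun i _ => by rw [hctr]; ring
        have hsplit2 : (∑ i, EGt i j * (W i j - colAvg W i)) = ∑ i, EGt i j * ctr W i j := by
          exact Finset.sum_congr rfl fun i _ => by rw [hctr]
        rw [hsplit]
        rw [hsplit2] at h2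
        linarith
      have hTeq : T = ∑ j, ∑ i, EG i j * (colAvg W i - p i) := by
        rw [hT]
        simp only [Finset.mul_sum]
        rw [Finset.sum_comm]
        exact Finset.sum_congr rfl fun j _ => Finset.sum_congr rfl fun i _ => by ring
      have hsumle := Finset.sum_le_sum (fun j (_ : j ∈ Finset.univ) => hj j)
      rw [← hTeq] at hsumle
      have hFcs : |∑ i, ∑ j, EG i j * ctr W i j| ≤ H * frobNorm (ctr W) :=
        le_trans (frob_cs EG (ctr W)) (mul_le_mul_of_nonneg_right hH hctr0)
      have hFcst : |∑ i, ∑ j, EGt i j * ctr W i j| ≤ H * frobNorm (ctr W) :=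
        le_trans (frob_cs EGt (ctr W)) (mul_le_mul_of_nonneg_right hHt hctr0)
      have hswap1 : ∑ j, ∑ i, EG i j * ctr W i j = ∑ i, ∑ j, EG i j * ctr W i j :=
        Finset.sum_comm
      have hswap2 : ∑ j, ∑ i, EGt i j * ctr W i j = ∑ i, ∑ j, EGt i j * ctr W i j :=
        Finset.sum_comm
      have hFsum : F (colAvg W) = ∑ j, Fj j (colAvg W) := by rw [hFdef]
      have hFp : (∑ j, Fj j p) = Fstar := by
        rw [← hFstar p hp, hFdef]
      have hexp : ∑ j, (Fj j (colAvg W) - Fj j p + (∑ i, EGt i j * ctr W i j)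
            - (∑ i, EG i j * ctr W i j))
          = (∑ j, Fj j (colAvg W)) - (∑ j, Fj j p)
            + (∑ j, ∑ i, EGt i j * ctr W i j) - ∑ j, ∑ i, EG i j * ctr W i j := by
        rw [Finset.sum_sub_distrib, Finset.sum_add_distrib, Finset.sum_sub_distrib]
      rw [hexp, hswap1, hswap2] at hsumle
      rw [hFsum]
      have habs1 := abs_le.1 hFcs
      have habs2 := abs_le.1 hFcst
      linarith [habs1.1, habs1.2, habs2.1, habs2.2, hsumle, hFp]
    -- put everything together
    have hint_le : ∫ ω, Metric.infDist (colAvg (W * A - η • G ω)) Wstar ^ 2 ∂μ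
        ≤ ∫ ω, f ω ∂μ := integral_mono hdint hf_int hpt
    rw [hIf] at hint_le
    have hmul : 2 * (η / M) * (F (colAvg W) - Fstar - 2 * H * frobNorm (ctr W))
        ≤ 2 * (η / M) * T :=
      mul_le_mul_of_nonneg_left hTge (by positivity)
    calc ∫ ω, Metric.infDist (colAvg (W * A - η • G ω)) Wstar ^ 2 ∂μ
        ≤ dist (colAvg W) p ^ 2 - 2 * (η / M) * T
            + η ^ 2 / M * ∫ ω, frobSq (G ω) ∂μ := hint_le
      _ ≤ dist (colAvg W) p ^ 2
            - 2 * (η / M) * (F (colAvg W) - Fstar - 2 * H * frobNorm (ctr W))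
            + η ^ 2 / M * E := by
          have hA : η ^ 2 / M * ∫ ω, frobSq (G ω) ∂μ ≤ η ^ 2 / M * E :=
            mul_le_mul_of_nonneg_left hE.2 (by positivity)
          linarith [hmul, hA]
      _ = dist (colAvg W) p ^ 2 + η ^ 2 * E / M + 4 * η * H / M * frobNorm (ctr W)
            - 2 * η / M * (F (colAvg W) - Fstar) := by ring
  -- pass from a fixed p to the infimum distance
  apply real_le_of_forall_pos_le_add
  intro ε hε
  set d := Metric.infDist (colAvg W) Wstar with hd
  have hd0 : 0 ≤ d := Metric.infDist_nonneg
  have hδpos : 0 < min 1 (ε / (2 * d + 1)) :=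
    lt_min one_pos (div_pos hε (by linarith))
  obtain ⟨p, hp, hplt⟩ := (Metric.infDist_lt_iff hWne).1
    (show d < d + min 1 (ε / (2 * d + 1)) by linarith)
  have h3 : min 1 (ε / (2 * d + 1)) ≤ 1 := min_le_left _ _
  have h4 : min 1 (ε / (2 * d + 1)) * (2 * d + 1) ≤ ε := by
    rw [← le_div_iff₀ (by linarith : (0:ℝ) < 2 * d + 1)]
    exact min_le_right _ _
  have h5 : 0 ≤ dist (colAvg W) p := dist_nonneg
  have h1 : dist (colAvg W) p ^ 2 ≤ d ^ 2 + ε := by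
    nlinarith [hplt, h3, h4, h5, hd0, hδpos.le]
  have h2 := key p hp
  linarith

end
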